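/- arXiv:1004.5188 — 8 statements merged into one kernel-verified Lean document; each statement's English description precedes it below -/
import Mathlib

section
/- (Viète's formula, nested radical form) The sequence 4^{(i+1)/2} · sqrt(2 - h_i), where h_0 = 0 and h_{i+1} = sqrt(2 + h_i), converges to π as i → ∞. -/
open Real Filter

theorem stmt_4 (h : ℕ → ℝ) (h0 : h 0 = 0)
    (hrec : ∀ i, h (i + 1) = Real.sqrt (2 + h i)) :
    Filter.Tendsto (fun i => (2 : ℝ) ^ (i + 1) * Real.sqrt (2 - h i))
      Filter.atTop (nhds Real.pi) := by
  have hπ := Real.pi_pos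
  have hhalf : ∀ n : ℕ, π / 2 ^ (n + 1) / 2 ∈ Set.Icc (0:ℝ) (π / 2) := by
    intro n
    constructor
    · positivity
    · rw [div_div]
      apply div_le_div_of_nonneg_left Real.pi_pos.le two_pos
      nlinarith [one_le_pow₀ (one_le_two (α := ℝ)) (n := n + 1)]
  have hkey : ∀ i : ℕ, h i = 2 * Real.cos (π / 2 ^ (i + 1)) := by
    intro i
    induction i with
    | zero => simp [h0]
    | succ n ih =>
      rw [hrec, ih]
      have hθ : π / 2 ^ (n + 1 + 1) = (π / 2 ^ (n + 1)) / 2 := by ring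
      have hc : Real.cos (π / 2 ^ (n + 1)) = 2 * Real.cos (π / 2 ^ (n + 1) / 2) ^ 2 - 1 := by
        have := Real.cos_sq (π / 2 ^ (n + 1) / 2)
        rw [show 2 * (π / 2 ^ (n + 1) / 2) = π / 2 ^ (n + 1) by ring] at this
        linarith
      have hcnn : 0 ≤ Real.cos (π / 2 ^ (n + 1) / 2) :=
        Real.cos_nonneg_of_mem_Icc ⟨by linarith [(hhalf n).1], (hhalf n).2⟩
      rw [hθ, hc, show 2 + 2 * (2 * Real.cos (π / 2 ^ (n + 1) / 2) ^ 2 - 1)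
        = (2 * Real.cos (π / 2 ^ (n + 1) / 2)) ^ 2 by ring,
        Real.sqrt_sq (by linarith)]
  -- rewrite the sequence as 2^(i+2) * sin (π / 2^(i+2))
  have hseq : ∀ i : ℕ, (2 : ℝ) ^ (i + 1) * Real.sqrt (2 - h i)
      = π * (Real.sin (π / 2 ^ (i + 2)) / (π / 2 ^ (i + 2))) := by
    intro i
    have hs : Real.cos (π / 2 ^ (i + 1)) = 1 - 2 * Real.sin (π / 2 ^ (i + 1) / 2) ^ 2 := by
      have h1 := Real.sin_sq_add_cos_sq (π / 2 ^ (i + 1) / 2)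
      have h2 := Real.cos_sq (π / 2 ^ (i + 1) / 2)
      rw [show 2 * (π / 2 ^ (i + 1) / 2) = π / 2 ^ (i + 1) by ring] at h2
      linarith
    have hsnn : 0 ≤ Real.sin (π / 2 ^ (i + 1) / 2) := by
      apply Real.sin_nonneg_of_nonneg_of_le_pi (hhalf i).1
      linarith [(hhalf i).2, Real.pi_pos]
    rw [hkey i, hs, show 2 - 2 * (1 - 2 * Real.sin (π / 2 ^ (i + 1) / 2) ^ 2)
      = (2 * Real.sin (π / 2 ^ (i + 1) / 2)) ^ 2 by ring,
      Real.sqrt_sq (by linarith), show π / 2 ^ (i + 2) = π / 2 ^ (i + 1) / 2 by ring]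
    have hne : π / 2 ^ (i + 1) / 2 ≠ 0 := by positivity
    field_simp
  simp_rw [hseq]
  -- sin x / x → 1 as x → 0 within {0}ᶜ
  have hsin : Tendsto (fun x : ℝ => Real.sin x / x) (nhdsWithin 0 {0}ᶜ) (nhds 1) := by
    simpa [slope_fun_def, div_eq_inv_mul] using
      (hasDerivAt_iff_tendsto_slope.mp (Real.hasDerivAt_sin 0))
  have htz : Tendsto (fun i : ℕ => π / 2 ^ (i + 2)) atTop (nhdsWithin 0 {0}ᶜ) := by
    apply tendsto_nhdsWithin_of_tendsto_nhds_of_eventually_within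
    · have : Tendsto (fun i : ℕ => ((2:ℝ) ^ (i + 2))⁻¹) atTop (nhds 0) := by
        apply tendsto_inv_atTop_zero.comp
        apply tendsto_atTop_mono (fun i => ?_) tendsto_natCast_atTop_atTop
        calc (i : ℝ) ≤ 2 ^ i := by exact_mod_cast Nat.lt_two_pow_self (n := i) |>.le
        _ ≤ 2 ^ (i + 2) := by apply pow_le_pow_right₀ one_le_two; omega
      simpa [div_eq_mul_inv] using this.const_mul π
    · filter_upwards with i
      simp only [Set.mem_compl_iff, Set.mem_singleton_iff]
      positivity
  have := (hsin.comp htz).const_mul π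
  simpa using this
end

section
/- For x > 1 and all i, the Pi-function satisfies the recursion Π_{i+1}(x)² = 2x · Π_i(x)² + (2x)^{i+2} · (h_i(x) − h_{i+1}(x)), where Π_i(x) = (2x)^{(i+1)/2} · sqrt(x − h_i(x)). -/
theorem stmt_9 (x : ℝ) (hx : 1 < x) (h : ℕ → ℝ) (h0 : h 0 = 0)
    (hrec : ∀ i, h (i + 1) = Real.sqrt (x * (x - 1) + h i))
    (hle : ∀ i, h i ≤ x)
    (Pi : ℕ → ℝ)
    (hPi : ∀ i, Pi i = (2 * x) ^ (((i : ℝ) + 1) / 2) * Real.sqrt (x - h i)) :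
    ∀ i, Pi (i + 1) ^ 2 = 2 * x * Pi i ^ 2 + (2 * x) ^ (i + 2) * (h i - h (i + 1)) := by
  have h2x : (0:ℝ) ≤ 2 * x := by linarith
  have hsq : ∀ j : ℕ, Pi j ^ 2 = (2 * x) ^ (j + 1) * (x - h j) := by
    intro j
    rw [hPi j, mul_pow, Real.sq_sqrt (by linarith [hle j])]
    congr 1
    rw [← Real.rpow_natCast ((2*x) ^ (((j : ℝ) + 1) / 2)) 2, ← Real.rpow_mul h2x]
    rw [show ((j : ℝ) + 1) / 2 * (2:ℕ) = ((j + 1 : ℕ) : ℝ) by push_cast; ring]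
    rw [Real.rpow_natCast]
  intro i
  rw [hsq, hsq]
  ring
end

section
/- For x > 1 and all i, Π_i(1−x)² = ((1/x) − 1)^{i+1} · Π_i(x)² − 2^{i+1} (1−x)^{i+1} (2x−1), where Π_i(y)² = (2y)^{i+1} (y − h_i(y)) and h_i(1−x) = h_i(x). -/
theorem stmt_11 (x : ℝ) (hx : 1 < x) (h : ℝ → ℕ → ℝ) (h0 : ∀ y, h y 0 = 0)
    (hrec : ∀ y i, h y (i + 1) = Real.sqrt (y * (y - 1) + h y i)) :
    ∀ i : ℕ,
      (2 * (1 - x)) ^ (i + 1) * ((1 - x) - h (1 - x) i) =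
        (1 / x - 1) ^ (i + 1) * ((2 * x) ^ (i + 1) * (x - h x i)) -
          2 ^ (i + 1) * (1 - x) ^ (i + 1) * (2 * x - 1) := by
  have hx0 : x ≠ 0 := by linarith
  intro i
  have H : h (1 - x) i = h x i := by
    induction i with
    | zero => rw [h0, h0]
    | succ n ih => rw [hrec, hrec, ih]; ring_nf
  have key : (1 / x - 1) ^ (i + 1) * (2 * x) ^ (i + 1) = (2 * (1 - x)) ^ (i + 1) := by
    rw [← mul_pow]
    congr 1
    field_simp
  rw [H, ← mul_assoc, key, ← mul_pow]
  ring
end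

section
/- For x > 1, the limit π_x = lim_{i→∞} (2x)^{(i+1)/2} sqrt(x − h_i(x)) exists and is finite, where h_0 = 0 and h_{i+1} = sqrt(x(x−1) + h_i). -/
private lemma aux_mono (x e s : ℝ) (hx : 1 < x) (he : 0 ≤ e) (hex : e ≤ x) (hs : 0 ≤ s)
    (hs2 : s^2 = x^2 - e) : e ≤ 2*x*(x - s) := by
  have hx0 : (0:ℝ) < x := by linarith
  nlinarith [sq_nonneg e, sq_nonneg (2*x*s),
    mul_nonneg (mul_nonneg (by linarith : (0:ℝ) ≤ 2*x) hs) (by nlinarith : 0 ≤ 2*x^2 - e)]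

private lemma aux_ratio (x e s : ℝ) (hx : 1 < x) (he : 0 ≤ e) (hex : e ≤ x) (hs : 0 ≤ s)
    (hs2 : s^2 = x^2 - e) : x - s ≤ e / x := by
  rw [le_div_iff₀ (by linarith)]
  nlinarith [sq_nonneg (x - s), sq_nonneg (x + s)]

private lemma aux_bnd (x e s : ℝ) (hx : 1 < x) (he : 0 ≤ e) (hex : e ≤ x) (hs : 0 ≤ s)
    (hs2 : s^2 = x^2 - e) : 2*x*(x - s) ≤ e * (1 + e / x^2) := by
  have hx0 : (0:ℝ) < x := by linarith
  have hx2 : (0:ℝ) < x^2 := by positivity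
  have hQ : 0 < 2*x^4 - e*x^2 - e^2 := by
    have h1 : e*x^2 ≤ x^3 := by nlinarith
    have h2 : e^2 ≤ x^2 := by nlinarith
    nlinarith [pow_pos hx0 2, pow_pos hx0 3]
  have hP : 0 < 2*x^3*s + (2*x^4 - e*x^2 - e^2) := by
    have : 0 ≤ 2*x^3*s := by positivity
    linarith
  have hid : (2*x^3*s - (2*x^4 - e*x^2 - e^2)) * (2*x^3*s + (2*x^4 - e*x^2 - e^2))
      = e^2*(x^2 - e)*(3*x^2 + e) := by linear_combination (4*x^6) * hs2
  have hfac : 0 ≤ (2*x^3*s - (2*x^4 - e*x^2 - e^2)) * (2*x^3*s + (2*x^4 - e*x^2 - e^2)) := by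
    rw [hid]
    have h1 : 0 ≤ x^2 - e := by nlinarith
    have h2 : 0 ≤ 3*x^2 + e := by positivity
    positivity
  have hkey : 2*x^4 - e*x^2 - e^2 ≤ 2*x^3*s := by nlinarith [hfac, hP]
  rw [show e*(1+e/x^2) = (e*x^2+e^2)/x^2 by field_simp, le_div_iff₀ hx2]
  nlinarith [hkey]

theorem stmt_12 (x : ℝ) (hx : 1 < x) (h : ℕ → ℝ) (h0 : h 0 = 0)
    (hrec : ∀ i, h (i + 1) = Real.sqrt (x * (x - 1) + h i)) :
    ∃ L : ℝ, Filter.Tendsto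
      (fun i : ℕ => (2 * x) ^ (((i : ℝ) + 1) / 2) * Real.sqrt (x - h i))
      Filter.atTop (nhds L) := by
  have hx0 : (0:ℝ) < x := by linarith
  have h2x : (0:ℝ) < 2*x := by linarith
  have hb : ∀ n, 0 ≤ h n ∧ h n ≤ x := by
    intro n
    induction n with
    | zero => rw [h0]; exact ⟨le_refl 0, by linarith⟩
    | succ n ih =>
      rw [hrec]
      refine ⟨Real.sqrt_nonneg _, ?_⟩
      have hle : x*(x-1) + h n ≤ x^2 := by nlinarith [ih.2]
      calc Real.sqrt (x*(x-1)+h n) ≤ Real.sqrt (x^2) := Real.sqrt_le_sqrt hle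
        _ = x := by rw [Real.sqrt_sq hx0.le]
  have hsq : ∀ n, (h (n+1))^2 = x^2 - (x - h n) := by
    intro n
    rw [hrec, Real.sq_sqrt (by nlinarith [(hb n).1] : 0 ≤ x*(x-1) + h n)]
    ring
  set a : ℕ → ℝ := fun n => (2*x)^(n+1) * (x - h n) with ha
  have hpow : ∀ n : ℕ, (0:ℝ) < (2*x)^(n+1) := fun n => pow_pos h2x _
  have hε : ∀ n, 0 ≤ x - h n := fun n => by linarith [(hb n).2]
  have hεx : ∀ n, x - h n ≤ x := fun n => by linarith [(hb n).1]
  have ha_nonneg : ∀ n, 0 ≤ a n := fun n => mul_nonneg (hpow n).le (hε n)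
  have hstep : ∀ n, a (n+1) = (2*x)^(n+1) * (2*x*(x - h (n+1))) := by
    intro n
    simp only [ha, pow_succ]
    ring
  have hmono : Monotone a := by
    apply monotone_nat_of_le_succ
    intro n
    rw [hstep n]
    exact mul_le_mul_of_nonneg_left
      (aux_mono x (x - h n) (h (n+1)) hx (hε n) (hεx n) (hb (n+1)).1 (hsq n)) (hpow n).le
  set c : ℝ := 1/(x*(x-1)) with hc
  have hc0 : 0 < c := by
    rw [hc]
    have : 0 < x*(x-1) := mul_pos hx0 (by linarith)
    positivity
  have hW : ∀ n, a (n+1) * Real.exp (c*(x - h (n+1))) ≤ a n * Real.exp (c*(x - h n)) := by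
    intro n
    have h1 : 2*x*(x - h (n+1)) ≤ (x - h n)*(1+(x - h n)/x^2) :=
      aux_bnd x (x - h n) (h (n+1)) hx (hε n) (hεx n) (hb (n+1)).1 (hsq n)
    have h2 : x - h (n+1) ≤ (x - h n)/x :=
      aux_ratio x (x - h n) (h (n+1)) hx (hε n) (hεx n) (hb (n+1)).1 (hsq n)
    have hinner : 2*x*(x - h (n+1)) * Real.exp (c*(x - h (n+1)))
        ≤ (x - h n) * Real.exp (c*(x - h n)) := by
      calc 2*x*(x - h (n+1)) * Real.exp (c*(x - h (n+1)))
          ≤ (x - h n)*(1+(x - h n)/x^2) * Real.exp (c*(x - h (n+1))) :=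
            mul_le_mul_of_nonneg_right h1 (Real.exp_nonneg _)
        _ ≤ (x - h n) * Real.exp ((x - h n)/x^2) * Real.exp (c*(x - h (n+1))) := by
            apply mul_le_mul_of_nonneg_right _ (Real.exp_nonneg _)
            apply mul_le_mul_of_nonneg_left _ (hε n)
            linarith [Real.add_one_le_exp ((x - h n)/x^2)]
        _ = (x - h n) * Real.exp ((x - h n)/x^2 + c*(x - h (n+1))) := by
            rw [Real.exp_add]; ring
        _ ≤ (x - h n) * Real.exp (c*(x - h n)) := by
            apply mul_le_mul_of_nonneg_left _ (hε n)
            apply Real.exp_le_exp.mpr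
            have heq : c * ((x - h n) - (x - h n)/x) = (x - h n)/x^2 := by
              have hx1 : x - 1 ≠ 0 := ne_of_gt (by linarith)
              have hxn : x ≠ 0 := ne_of_gt hx0
              rw [hc]
              field_simp
            have h3 : c * (x - h (n+1)) ≤ c * ((x - h n)/x) :=
              mul_le_mul_of_nonneg_left h2 hc0.le
            linarith
    calc a (n+1) * Real.exp (c*(x - h (n+1)))
        = (2*x)^(n+1) * (2*x*(x - h (n+1)) * Real.exp (c*(x - h (n+1)))) := by
          rw [hstep n]; ring
      _ ≤ (2*x)^(n+1) * ((x - h n) * Real.exp (c*(x - h n))) :=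
          mul_le_mul_of_nonneg_left hinner (hpow n).le
      _ = a n * Real.exp (c*(x - h n)) := by simp only [ha]; ring
  have hWle : ∀ n, a n * Real.exp (c*(x - h n)) ≤ a 0 * Real.exp (c*(x - h 0)) := by
    intro n
    induction n with
    | zero => exact le_refl _
    | succ n ih => exact (hW n).trans ih
  have hbdd : BddAbove (Set.range a) := by
    refine ⟨a 0 * Real.exp (c*(x - h 0)), ?_⟩
    rintro _ ⟨n, rfl⟩
    calc a n ≤ a n * Real.exp (c*(x - h n)) :=
          le_mul_of_one_le_right (ha_nonneg n)
            (Real.one_le_exp (mul_nonneg hc0.le (hε n)))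
      _ ≤ _ := hWle n
  have hA : Filter.Tendsto a Filter.atTop (nhds (⨆ n, a n)) :=
    tendsto_atTop_ciSup hmono hbdd
  refine ⟨Real.sqrt (⨆ n, a n), ?_⟩
  have hcomp : Filter.Tendsto (fun n => Real.sqrt (a n)) Filter.atTop
      (nhds (Real.sqrt (⨆ n, a n))) :=
    (Real.continuous_sqrt.tendsto _).comp hA
  refine hcomp.congr (fun n => ?_)
  show Real.sqrt ((2*x)^(n+1) * (x - h n)) = _
  rw [Real.sqrt_mul (pow_nonneg h2x.le _)]
  congr 1
  rw [Real.sqrt_eq_rpow, ← Real.rpow_natCast (2*x) (n+1), ← Real.rpow_mul h2x.le]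
  congr 1
  push_cast
  ring
end

section
/- For x > 1, since x − h_{i+1} = (x − h_i)/(x + h_{i+1}) with h_i → x, the ratio sqrt((x − h_i)/(x − h_{i+1})) converges to sqrt(2x) as i → ∞. -/
theorem stmt_13 (x : ℝ) (hx : 1 < x) (h : ℕ → ℝ) (h0 : h 0 = 0)
    (hrec : ∀ i, h (i + 1) = Real.sqrt (x * (x - 1) + h i))
    (hlt : ∀ i, h i < x) :
    Filter.Tendsto (fun i => Real.sqrt ((x - h i) / (x - h (i + 1))))
      Filter.atTop (nhds (Real.sqrt (2 * x))) := by
  have hx0 : (0:ℝ) < x := by linarith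
  have hpos : ∀ i, 0 ≤ h i := by
    intro i
    cases i with
    | zero => simp [h0]
    | succ n => rw [hrec]; exact Real.sqrt_nonneg _
  have harg : ∀ i, 0 ≤ x * (x - 1) + h i := by
    intro i
    have := hpos i
    nlinarith
  have hsq : ∀ i, h (i + 1) ^ 2 = x * (x - 1) + h i := by
    intro i
    rw [hrec]
    exact Real.sq_sqrt (harg i)
  have hden : ∀ i, 0 < x + h (i + 1) := fun i => by
    have := hpos (i + 1); linarith
  have key : ∀ i, x - h (i + 1) = (x - h i) / (x + h (i + 1)) := by
    intro i
    rw [eq_div_iff (ne_of_gt (hden i))]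
    have := hsq i
    nlinarith
  -- geometric bound
  have bound : ∀ i, x - h i ≤ x * (1 / x) ^ i := by
    intro i
    induction i with
    | zero => simp [h0]
    | succ n ih =>
      have h1 : x - h (n + 1) ≤ (x - h n) / x := by
        rw [key n]
        apply div_le_div_of_nonneg_left (by have := hlt n; linarith) hx0
        have := hpos (n + 1); linarith
      calc x - h (n + 1) ≤ (x - h n) / x := h1
        _ ≤ (x * (1 / x) ^ n) / x := div_le_div_of_nonneg_right ih hx0.le |>.trans_eq rfl
        _ = x * (1 / x) ^ (n + 1) := by
            rw [pow_succ]; field_simp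
  have hgeo : Filter.Tendsto (fun i => x * (1 / x) ^ i) Filter.atTop (nhds 0) := by
    rw [show (0:ℝ) = x * 0 by ring]
    apply Filter.Tendsto.const_mul
    apply tendsto_pow_atTop_nhds_zero_of_lt_one
    · positivity
    · rw [div_lt_one hx0]; linarith
  have hdiff : Filter.Tendsto (fun i => x - h i) Filter.atTop (nhds 0) := by
    apply squeeze_zero (fun i => by have := hlt i; linarith) bound hgeo
  have hh : Filter.Tendsto h Filter.atTop (nhds x) := by
    have := hdiff.const_sub x
    simpa using this
  have hh1 : Filter.Tendsto (fun i => x + h (i + 1)) Filter.atTop (nhds (2 * x)) := by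
    have : Filter.Tendsto (fun i => h (i + 1)) Filter.atTop (nhds x) :=
      hh.comp (Filter.tendsto_add_atTop_nat 1)
    have := this.const_add x
    simpa [two_mul] using this
  have heq : ∀ i, (x - h i) / (x - h (i + 1)) = x + h (i + 1) := by
    intro i
    rw [eq_comm, eq_div_iff (by have := hlt (i + 1); intro hc; linarith [sub_eq_zero.mp hc] : x - h (i + 1) ≠ 0)]
    rw [key i, mul_div_cancel₀ _ (ne_of_gt (hden i))]
  simp only [heq]
  exact (Real.continuous_sqrt.continuousAt.tendsto.comp hh1)
end

section
/- For x = 2, the generalized Pi-function limit equals π: lim_{i→∞} 4^{(i+1)/2} sqrt(2 − h_i) = π, where h_0 = 0 and h_{i+1} = sqrt(2 + h_i). -/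
open Real Filter

theorem stmt_15 (h : ℕ → ℝ) (h0 : h 0 = 0)
    (hrec : ∀ i, h (i + 1) = Real.sqrt (2 + h i)) :
    Filter.Tendsto (fun i => (2 : ℝ) ^ (i + 1) * Real.sqrt (2 - h i))
      Filter.atTop (nhds Real.pi) := by
  have hh : ∀ i, h i = Real.sqrtTwoAddSeries 0 i := by
    intro i
    induction i with
    | zero => simpa using h0
    | succ n ih => rw [hrec, ih, Real.sqrtTwoAddSeries]
  have key : ∀ i, (2 : ℝ) ^ (i + 1) * Real.sqrt (2 - h i)
      = (2 : ℝ) ^ (i + 2) * Real.sin (π / 2 ^ (i + 2)) := by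
    intro i
    rw [hh, Real.sin_pi_over_two_pow_succ]
    ring
  simp only [key]
  have hslope : Tendsto (slope Real.sin 0) (nhdsWithin 0 {0}ᶜ) (nhds 1) := by
    have := hasDerivAt_iff_tendsto_slope.mp (Real.hasDerivAt_sin 0)
    simpa using this
  have h2 : Tendsto (fun i : ℕ => (2 : ℝ) ^ (i + 2)) atTop atTop := by
    have hp := tendsto_pow_atTop_atTop_of_one_lt (by norm_num : (1:ℝ) < 2)
    exact hp.comp (tendsto_add_atTop_nat 2)
  have hx0 : Tendsto (fun i : ℕ => π / 2 ^ (i + 2)) atTop (nhds 0) :=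
    tendsto_const_nhds.div_atTop h2
  have hx : Tendsto (fun i : ℕ => π / 2 ^ (i + 2)) atTop (nhdsWithin 0 {0}ᶜ) := by
    refine tendsto_nhdsWithin_of_tendsto_nhds_of_eventually_within _ hx0 ?_
    filter_upwards with i
    have : 0 < π / 2 ^ (i + 2) := by positivity
    simpa using this.ne'
  have hcomp := hslope.comp hx
  have hmul := hcomp.const_mul π
  rw [mul_one] at hmul
  refine hmul.congr fun i => ?_
  have hne : π / 2 ^ (i + 2) ≠ 0 := by positivity
  simp only [Function.comp_apply, slope_def_field]
  field_simp [slope, Real.sin_zero]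
  rw [Real.sin_zero]
  ring
end

section
/- For x > 1, the sequence Π_i(x)² = (2x)^{i+1}(x − h_i(x)) is bounded above, where h_0 = 0 and h_{i+1} = sqrt(x(x−1) + h_i). -/
theorem stmt_18 (x : ℝ) (hx : 1 < x) (h : ℕ → ℝ) (h0 : h 0 = 0)
    (hrec : ∀ i, h (i + 1) = Real.sqrt (x * (x - 1) + h i)) :
    ∃ C : ℝ, ∀ i, (2 * x) ^ (i + 1) * (x - h i) ≤ C := by
  have hx0 : (0:ℝ) < x := by linarith
  have hnn : ∀ i, 0 ≤ h i := by
    intro i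
    cases i with
    | zero => rw [h0]
    | succ n => rw [hrec]; exact Real.sqrt_nonneg _
  have hle : ∀ i, h i ≤ x := by
    intro i
    induction i with
    | zero => rw [h0]; linarith
    | succ n ih =>
      rw [hrec]
      have h1 : x * (x - 1) + h n ≤ x ^ 2 := by nlinarith
      calc Real.sqrt (x * (x - 1) + h n) ≤ Real.sqrt (x ^ 2) := Real.sqrt_le_sqrt h1
        _ = x := by rw [Real.sqrt_sq hx0.le]
  have hsq : ∀ i, (h (i + 1)) ^ 2 = x * (x - 1) + h i := by
    intro i
    rw [hrec]
    exact Real.sq_sqrt (by nlinarith [hnn i])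
  have hkey : ∀ i, (x - h (i + 1)) * (x + h (i + 1)) = x - h i := by
    intro i
    linear_combination -hsq i
  -- geometric decay
  set r : ℝ := 1 / x with hr
  have hr0 : 0 < r := by positivity
  have hr1 : r < 1 := by
    rw [hr, div_lt_one hx0]; linarith
  have hdecay : ∀ i, x - h i ≤ x * r ^ i := by
    intro i
    induction i with
    | zero => rw [h0]; norm_num
    | succ n ih =>
      have hk := hkey n
      have h1 : (x - h (n + 1)) * x ≤ x - h n := by
        nlinarith [hle (n + 1), hnn (n + 1)]
      have hrx : r * x = 1 := by rw [hr, one_div, inv_mul_cancel₀ hx0.ne']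
      have : (x - h (n + 1)) * x ≤ x * r ^ n := le_trans h1 ih
      calc x - h (n + 1) = (x - h (n + 1)) * x * r := by
              rw [mul_assoc, mul_comm x r, hrx, mul_one]
        _ ≤ x * r ^ n * r := by
              exact mul_le_mul_of_nonneg_right this hr0.le
        _ = x * r ^ (n + 1) := by ring
  set a : ℕ → ℝ := fun i => (2 * x) ^ (i + 1) * (x - h i) with ha
  have hanum : ∀ i, 0 ≤ a i := by
    intro i
    exact mul_nonneg (by positivity) (by linarith [hle i])
  have hstep : ∀ i, a (i + 1) ≤ a i * (1 + r ^ (i + 1)) := by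
    intro i
    have hk := hkey i
    have hpos : 0 < x + h (i + 1) := by nlinarith [hnn (i + 1)]
    have hid : a (i + 1) * (x + h (i + 1)) = 2 * x * a i := by
      simp only [ha]
      calc (2 * x) ^ (i + 1 + 1) * (x - h (i + 1)) * (x + h (i + 1))
          = (2 * x) ^ (i + 1 + 1) * ((x - h (i + 1)) * (x + h (i + 1))) := by ring
        _ = (2 * x) ^ (i + 1 + 1) * (x - h i) := by rw [hk]
        _ = 2 * x * ((2 * x) ^ (i + 1) * (x - h i)) := by ring
    have hq : x - h (i + 1) ≤ x * r ^ (i + 1) := hdecay (i + 1)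
    have hineq : 2 * x * a i ≤ a i * (1 + r ^ (i + 1)) * (x + h (i + 1)) := by
      have h2 : (1 + r ^ (i + 1)) * (x + h (i + 1)) - 2 * x
          = r ^ (i + 1) * (x + h (i + 1)) - (x - h (i + 1)) := by ring
      have h3 : x * r ^ (i + 1) ≤ r ^ (i + 1) * (x + h (i + 1)) := by
        nlinarith [hnn (i + 1), pow_nonneg hr0.le (i + 1)]
      nlinarith [hanum i]
    have := hid ▸ hineq
    exact le_of_mul_le_mul_right this hpos
  have hbound : ∀ i, a i ≤ 2 * x ^ 2 * ∏ j ∈ Finset.range i, (1 + r ^ (j + 1)) := by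
    intro i
    induction i with
    | zero => simp [ha, h0]; nlinarith
    | succ n ih =>
      have h1 : a (n + 1) ≤ a n * (1 + r ^ (n + 1)) := hstep n
      have h2 : a n * (1 + r ^ (n + 1)) ≤
          2 * x ^ 2 * (∏ j ∈ Finset.range n, (1 + r ^ (j + 1))) * (1 + r ^ (n + 1)) := by
        apply mul_le_mul_of_nonneg_right ih
        positivity
      rw [Finset.prod_range_succ]
      calc a (n + 1) ≤ a n * (1 + r ^ (n + 1)) := h1
        _ ≤ 2 * x ^ 2 * (∏ j ∈ Finset.range n, (1 + r ^ (j + 1))) * (1 + r ^ (n + 1)) := h2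
        _ = 2 * x ^ 2 * ((∏ j ∈ Finset.range n, (1 + r ^ (j + 1))) * (1 + r ^ (n + 1))) := by
            ring
  have hsumle : ∀ i, ∑ j ∈ Finset.range i, r ^ (j + 1) ≤ 1 / (x - 1) := by
    intro i
    have hgeom : (1 - r) * ∑ j ∈ Finset.range i, r ^ j = 1 - r ^ i := by
      have := geom_sum_mul r i
      nlinarith [this]
    have hsum_nonneg : (0:ℝ) ≤ ∑ j ∈ Finset.range i, r ^ j :=
      Finset.sum_nonneg fun j _ => pow_nonneg hr0.le j
    have h1 : ∑ j ∈ Finset.range i, r ^ (j + 1) = r * ∑ j ∈ Finset.range i, r ^ j := by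
      rw [Finset.mul_sum]
      exact Finset.sum_congr rfl fun j _ => by ring
    have h2 : ∑ j ∈ Finset.range i, r ^ j ≤ 1 / (1 - r) := by
      rw [le_div_iff₀ (by linarith)]
      nlinarith [pow_nonneg hr0.le i]
    have h3 : r / (1 - r) = 1 / (x - 1) := by
      rw [hr]; field_simp
    rw [h1]
    calc r * ∑ j ∈ Finset.range i, r ^ j ≤ r * (1 / (1 - r)) :=
          mul_le_mul_of_nonneg_left h2 hr0.le
      _ = r / (1 - r) := by ring
      _ = 1 / (x - 1) := h3
  have hprodle : ∀ i, ∏ j ∈ Finset.range i, (1 + r ^ (j + 1)) ≤ Real.exp (1 / (x - 1)) := by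
    intro i
    have h1 : ∏ j ∈ Finset.range i, (1 + r ^ (j + 1)) ≤
        ∏ j ∈ Finset.range i, Real.exp (r ^ (j + 1)) := by
      apply Finset.prod_le_prod
      · intro j _; positivity
      · intro j _
        have := Real.add_one_le_exp (r ^ (j + 1))
        linarith
    have h2 : ∏ j ∈ Finset.range i, Real.exp (r ^ (j + 1)) =
        Real.exp (∑ j ∈ Finset.range i, r ^ (j + 1)) := (Real.exp_sum _ _).symm
    calc ∏ j ∈ Finset.range i, (1 + r ^ (j + 1))
        ≤ Real.exp (∑ j ∈ Finset.range i, r ^ (j + 1)) := h2 ▸ h1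
      _ ≤ Real.exp (1 / (x - 1)) := Real.exp_le_exp.mpr (hsumle i)
  refine ⟨2 * x ^ 2 * Real.exp (1 / (x - 1)), fun i => ?_⟩
  calc (2 * x) ^ (i + 1) * (x - h i) = a i := rfl
    _ ≤ 2 * x ^ 2 * ∏ j ∈ Finset.range i, (1 + r ^ (j + 1)) := hbound i
    _ ≤ 2 * x ^ 2 * Real.exp (1 / (x - 1)) := by
        apply mul_le_mul_of_nonneg_left (hprodle i)
        positivity
end

section
/- For x > 1, the sequence of squares Π_i(x)² = (2x)^{i+1}(x − h_i(x)) is monotone increasing in i, where h_0 = 0 and h_{i+1} = sqrt(x(x−1) + h_i). -/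
theorem stmt_19 (x : ℝ) (hx : 1 < x) (h : ℕ → ℝ) (h0 : h 0 = 0)
    (hrec : ∀ i, h (i + 1) = Real.sqrt (x * (x - 1) + h i)) :
    Monotone (fun i : ℕ => (2 * x) ^ (i + 1) * (x - h i)) := by
  have hx0 : (0:ℝ) < x := by linarith
  have hb : ∀ i, 0 ≤ h i ∧ h i ≤ x := by
    intro i
    induction i with
    | zero => constructor <;> simp [h0] <;> linarith
    | succ n ih =>
      have harg : 0 ≤ x * (x - 1) + h n := by nlinarith [ih.1]
      constructor
      · rw [hrec]; exact Real.sqrt_nonneg _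
      · rw [hrec]
        have := Real.sqrt_le_sqrt (show x*(x-1)+h n ≤ x^2 by nlinarith [ih.2])
        rwa [Real.sqrt_sq hx0.le] at this
  apply monotone_nat_of_le_succ
  intro i
  have hsq : h (i+1) ^ 2 = x * (x - 1) + h i := by
    rw [hrec, Real.sq_sqrt]; nlinarith [(hb i).1]
  have key : x - h i = (x - h (i+1)) * (x + h (i+1)) := by nlinarith
  have h1 : (x - h (i+1)) * (x + h (i+1)) ≤ (x - h (i+1)) * (2*x) := by
    apply mul_le_mul_of_nonneg_left _ (by linarith [(hb (i+1)).2])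
    linarith [(hb (i+1)).2]
  have hp : (0:ℝ) ≤ (2*x)^(i+1) := by positivity
  calc (2*x)^(i+1) * (x - h i) ≤ (2*x)^(i+1) * ((x - h (i+1)) * (2*x)) := by
        rw [key]; exact mul_le_mul_of_nonneg_left h1 hp
    _ = (2*x)^(i+1+1) * (x - h (i+1)) := by ring
end
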